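/- Let A, B ∈ ℝ^{m×m} with A symmetric and B symmetric positive definite. Then the minimum of tr(Pᵀ A P) over all P ∈ ℝ^{m×d} satisfying Pᵀ B P = I_d equals the sum of the d smallest generalized eigenvalues of the pencil (A, B), i.e., eigenvalues λ with A v = λ B v. -/

import Mathlib

open Matrix BigOperators

section OldSqrt

open scoped ComplexOrder

/-- The positive semidefinite square root, as defined in Mathlib of December 2024
(`Matrix.PosSemidef.sqrt`, removed since in favour of `CFC.sqrt`). -/
noncomputable def Matrix.PosSemidef.sqrt {n 𝕜 : Type*} [Fintype n] [DecidableEq n] [RCLike 𝕜]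
    {A : Matrix n n 𝕜} (hA : A.PosSemidef) : Matrix n n 𝕜 :=
  hA.1.eigenvectorUnitary.1 * diagonal ((↑) ∘ (√·) ∘ hA.1.eigenvalues) *
    (star hA.1.eigenvectorUnitary : Matrix n n 𝕜)

end OldSqrt

lemma old_sqrt_isHermitian {n : Type*} [Fintype n] [DecidableEq n]
    {A : Matrix n n ℝ} (hA : A.PosSemidef) : hA.sqrt.IsHermitian := by
  unfold IsHermitian Matrix.PosSemidef.sqrt
  simp [conjTranspose_mul, diagonal_conjTranspose, Matrix.mul_assoc,
    Matrix.star_eq_conjTranspose, conjTranspose_eq_transpose_of_trivial]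

lemma old_sqrt_mul_self {n : Type*} [Fintype n] [DecidableEq n]
    {A : Matrix n n ℝ} (hA : A.PosSemidef) : hA.sqrt * hA.sqrt = A := by
  have hU : (star hA.1.eigenvectorUnitary : Matrix n n ℝ) * hA.1.eigenvectorUnitary.1 = 1 :=
    Unitary.coe_star_mul_self _
  unfold Matrix.PosSemidef.sqrt
  rw [show ∀ X Y Z : Matrix n n ℝ, X * Y * Z * (X * Y * Z) = X * (Y * (Z * X) * Y) * Z by
    intro X Y Z; simp only [Matrix.mul_assoc], hU, Matrix.mul_one, diagonal_mul_diagonal]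
  conv_rhs => rw [hA.1.spectral_theorem, Unitary.conjStarAlgAut_apply]
  congr 3
  funext i
  simp [Real.mul_self_sqrt (hA.eigenvalues_nonneg i)]

lemma sum_if_lt_aux (m d : ℕ) (hd : d ≤ m) (g : Fin m → ℝ) :
    ∑ i : Fin m, (if (i : ℕ) < d then g i else 0) = ∑ i : Fin d, g (Fin.castLE hd i) := by
  classical
  set G : ℕ → ℝ := fun n => if h : n < m then g ⟨n, h⟩ else 0 with hG
  have h1 : ∑ i : Fin m, (if (i : ℕ) < d then g i else 0)
      = ∑ n ∈ Finset.range m, (if n < d then G n else 0) := by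
    rw [← Fin.sum_univ_eq_sum_range (fun n => if n < d then G n else 0) m]
    refine Finset.sum_congr rfl fun i _ => ?_
    by_cases hi : (i : ℕ) < d <;> simp [hi, hG, i.2]
  have h2 : ∑ i : Fin d, g (Fin.castLE hd i) = ∑ n ∈ Finset.range d, G n := by
    rw [← Fin.sum_univ_eq_sum_range (fun n => G n) d]
    refine Finset.sum_congr rfl fun i _ => ?_
    simp [hG, Nat.lt_of_lt_of_le i.2 hd]
    rfl
  have h3 : ∑ n ∈ Finset.range m, (if n < d then G n else 0)
      = ∑ n ∈ Finset.range d, G n := by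
    rw [← Finset.sum_subset (Finset.range_subset_range.2 hd)
      (fun x _ hx => by simp only [Finset.mem_range, not_lt] at hx; simp [not_lt.2 hx])]
    exact Finset.sum_congr rfl fun x hx => by
      simp only [Finset.mem_range] at hx; simp [hx]
  rw [h1, h3, h2]

lemma key_ineq (m d : ℕ) (hd : d ≤ m) (μ t : Fin m → ℝ) (hμ : Monotone μ)
    (ht0 : ∀ i, 0 ≤ t i) (ht1 : ∀ i, t i ≤ 1) (hsum : ∑ i, t i = (d : ℝ)) :
    ∑ i : Fin d, μ (Fin.castLE hd i) ≤ ∑ i, μ i * t i := by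
  rcases Nat.eq_zero_or_pos m with hm | hm
  · have hd0 : d = 0 := by omega
    subst hd0; subst hm; simp
  · set c : ℝ := μ ⟨min d (m-1), by omega⟩ with hc
    have hμle : ∀ i : Fin m, (i : ℕ) < d → μ i ≤ c := fun i hi => by
      apply hμ; rw [Fin.le_def]; simp; omega
    have hcle : ∀ i : Fin m, d ≤ (i : ℕ) → c ≤ μ i := fun i hi => by
      apply hμ; rw [Fin.le_def]; simp; omega
    have hind : ∑ i : Fin m, (if (i:ℕ) < d then (1:ℝ) else 0) = (d : ℝ) := by
      rw [sum_if_lt_aux m d hd]; simp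
    have hsel : ∑ i : Fin m, (if (i:ℕ) < d then μ i else 0) = ∑ i : Fin d, μ (Fin.castLE hd i) :=
      sum_if_lt_aux m d hd μ
    have key : 0 ≤ ∑ i : Fin m, (μ i - c) * (t i - (if (i:ℕ) < d then 1 else 0)) := by
      apply Finset.sum_nonneg
      intro i _
      by_cases hi : (i:ℕ) < d
      · rw [if_pos hi]
        have h1 := hμle i hi; have h2 := ht1 i
        nlinarith
      · rw [if_neg hi]
        have h1 := hcle i (le_of_not_gt hi); have h2 := ht0 i
        nlinarith
    have expand : ∀ i : Fin m, (μ i - c) * (t i - (if (i:ℕ) < d then 1 else 0))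
        = μ i * t i - (if (i:ℕ) < d then μ i else 0) - c * t i + c * (if (i:ℕ) < d then 1 else 0) := by
      intro i; by_cases hi : (i:ℕ) < d <;> simp [hi] <;> ring
    rw [Finset.sum_congr rfl (fun i _ => expand i), Finset.sum_add_distrib,
      Finset.sum_sub_distrib, Finset.sum_sub_distrib, ← Finset.mul_sum, ← Finset.mul_sum,
      hsum, hind, hsel] at key
    linarith

open Matrix BigOperators

theorem trace_min_eq_sum_smallest_generalized_eigenvalues
    (m d : ℕ) (hd : d ≤ m)
    (A B : Matrix (Fin m) (Fin m) ℝ)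
    (hA : A.IsHermitian) (hB : B.PosDef)
    (Bs : Matrix (Fin m) (Fin m) ℝ) (hBs : Bs = hB.posSemidef.sqrt)
    (Cmat : Matrix (Fin m) (Fin m) ℝ) (hCmat : Cmat = Bs⁻¹ * A * Bs⁻¹)
    (hC : Cmat.IsHermitian) :
    ∃ σ : Equiv.Perm (Fin m), Monotone (hC.eigenvalues ∘ σ) ∧
      IsLeast
        {t : ℝ | ∃ P : Matrix (Fin m) (Fin d) ℝ,
          Pᵀ * B * P = 1 ∧ t = Matrix.trace (Pᵀ * A * P)}
        (∑ i : Fin d, hC.eigenvalues (σ (Fin.castLE hd i))) := by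
  classical
  set lam : Fin m → ℝ := hC.eigenvalues with hlam
  set σ : Equiv.Perm (Fin m) := Tuple.sort lam with hσ
  have hmono : Monotone (lam ∘ σ) := Tuple.monotone_sort lam
  -- basic facts about Bs
  have hBsH : Bs.IsHermitian := by rw [hBs]; exact old_sqrt_isHermitian hB.posSemidef
  have hBsT : Bsᵀ = Bs := by
    have h := hBsH
    rwa [Matrix.IsHermitian, conjTranspose_eq_transpose_of_trivial] at h
  have hBB : Bs * Bs = B := by rw [hBs]; exact old_sqrt_mul_self hB.posSemidef
  have hdetBs : IsUnit Bs.det := by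
    have h : Bs.det * Bs.det = B.det := by rw [← det_mul, hBB]
    have hBdet : IsUnit B.det := hB.det_pos.ne'.isUnit
    exact isUnit_of_mul_isUnit_left (h ▸ hBdet)
  have hBsinv : Bs⁻¹ * Bs = 1 := Matrix.nonsing_inv_mul Bs hdetBs
  have hBsinv' : Bs * Bs⁻¹ = 1 := Matrix.mul_nonsing_inv Bs hdetBs
  have hBsinvT : (Bs⁻¹)ᵀ = Bs⁻¹ := by rw [Matrix.transpose_nonsing_inv, hBsT]
  have hAeq : A = Bs * Cmat * Bs := by
    rw [hCmat, show Bs * (Bs⁻¹ * A * Bs⁻¹) * Bs = (Bs * Bs⁻¹) * A * (Bs⁻¹ * Bs) by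
      noncomm_ring, hBsinv', hBsinv, Matrix.one_mul, Matrix.mul_one]
  -- unitary diagonalization of Cmat
  set U : Matrix (Fin m) (Fin m) ℝ := (hC.eigenvectorUnitary : Matrix (Fin m) (Fin m) ℝ) with hU
  have hUU' : U * star U = 1 := Matrix.mem_unitaryGroup_iff.mp hC.eigenvectorUnitary.2
  have hUU : star U * U = 1 := Matrix.mem_unitaryGroup_iff'.mp hC.eigenvectorUnitary.2
  have hstarU : star U = Uᵀ := by
    rw [Matrix.star_eq_conjTranspose, conjTranspose_eq_transpose_of_trivial]
  have hD : Uᵀ * Cmat * U = diagonal lam := by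
    have h := hC.conjStarAlgAut_star_eigenvectorUnitary
    rw [Unitary.conjStarAlgAut_apply, Unitary.coe_star, star_star] at h
    rw [hstarU] at h
    simpa [RCLike.ofReal_real_eq_id, Function.id_comp] using h
  rw [hstarU] at hUU hUU'
  -- cancellation helpers
  have canBs : ∀ {k : Type} [Fintype k] (X : Matrix (Fin m) k ℝ), Bs⁻¹ * (Bs * X) = X := by
    intro k _ X; rw [← Matrix.mul_assoc, hBsinv, Matrix.one_mul]
  have canBs' : ∀ {k : Type} [Fintype k] (X : Matrix (Fin m) k ℝ), Bs * (Bs⁻¹ * X) = X := by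
    intro k _ X; rw [← Matrix.mul_assoc, hBsinv', Matrix.one_mul]
  have canU : ∀ {k : Type} [Fintype k] (X : Matrix (Fin m) k ℝ), U * (Uᵀ * X) = X := by
    intro k _ X; rw [← Matrix.mul_assoc, hUU', Matrix.one_mul]
  have canU' : ∀ {k : Type} [Fintype k] (X : Matrix (Fin m) k ℝ), Uᵀ * (U * X) = X := by
    intro k _ X; rw [← Matrix.mul_assoc, hUU, Matrix.one_mul]
  refine ⟨σ, hmono, ?_, ?_⟩
  · -- membership : exhibit P achieving the sum
    set f : Fin d → Fin m := fun i => σ (Fin.castLE hd i) with hf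
    have hfinj : Function.Injective f := fun i j hij => by
      have := σ.injective hij
      exact Fin.castLE_injective hd this
    set E : Matrix (Fin m) (Fin d) ℝ := Matrix.of (fun k i => if k = f i then 1 else 0) with hE
    have hEE : Eᵀ * E = 1 := by
      ext i j
      simp only [Matrix.mul_apply, Matrix.transpose_apply, hE, Matrix.of_apply,
        Matrix.one_apply, ite_mul, one_mul, zero_mul]
      rw [Finset.sum_ite_eq' Finset.univ (f i) (fun k => if k = f j then (1:ℝ) else 0)]
      simp only [Finset.mem_univ, if_true]
      by_cases h : i = j
      · simp [h]
      · rw [if_neg (fun hc => h (hfinj hc)), if_neg h]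
    refine ⟨Bs⁻¹ * (U * E), ?_, ?_⟩
    · rw [← hBB]
      rw [Matrix.transpose_mul, Matrix.transpose_mul, hBsinvT]
      simp only [Matrix.mul_assoc]
      rw [canBs, canBs', canU']
      exact hEE
    · rw [hAeq]
      rw [Matrix.transpose_mul, Matrix.transpose_mul, hBsinvT]
      simp only [Matrix.mul_assoc]
      rw [canBs, show Cmat * (Bs * (Bs⁻¹ * (U * E))) = Cmat * (U * E) by rw [canBs']]
      rw [show Eᵀ * (Uᵀ * (Cmat * (U * E))) = Eᵀ * ((Uᵀ * Cmat * U) * E) by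
        simp only [Matrix.mul_assoc], hD]
      rw [Matrix.trace]
      refine Finset.sum_congr rfl fun i _ => ?_
      simp only [Matrix.diag_apply, Matrix.mul_apply, Matrix.transpose_apply, hE,
        Matrix.of_apply, Matrix.diagonal_apply, ite_mul, mul_ite, one_mul, zero_mul,
        mul_one, mul_zero, Finset.sum_ite_eq, Finset.sum_ite_eq', Finset.mem_univ, if_true]
      rfl
  · -- lower bound
    rintro x ⟨P, hP, rfl⟩
    set R : Matrix (Fin m) (Fin d) ℝ := Uᵀ * (Bs * P) with hR
    have hRR : Rᵀ * R = 1 := by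
      rw [hR, Matrix.transpose_mul, Matrix.transpose_mul, Matrix.transpose_transpose, hBsT]
      simp only [Matrix.mul_assoc]
      rw [canU, show Bs * (Bs * P) = B * P by rw [← Matrix.mul_assoc, hBB]]
      rw [← Matrix.mul_assoc]
      exact hP
    have hPAP : Pᵀ * A * P = Rᵀ * diagonal lam * R := by
      rw [← hD, hR, Matrix.transpose_mul, Matrix.transpose_mul, Matrix.transpose_transpose, hBsT]
      simp only [Matrix.mul_assoc]
      rw [canU, canU, hAeq]
      simp only [Matrix.mul_assoc]
    set s : Fin m → ℝ := fun i => ∑ j, (R i j) ^ 2 with hs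
    have hcol : ∀ j, ∑ i, (R i j) ^ 2 = 1 := by
      intro j
      have h := congrArg (fun M => M j j) hRR
      simp only [Matrix.mul_apply, Matrix.transpose_apply, Matrix.one_apply_eq] at h
      rw [← h]
      exact Finset.sum_congr rfl fun i _ => (sq (R i j)).symm ▸ by ring
    have hsum : ∑ i, s i = (d : ℝ) := by
      simp only [hs]
      rw [Finset.sum_comm]
      simp [hcol]
    have hs0 : ∀ i, 0 ≤ s i := fun i => Finset.sum_nonneg fun j _ => sq_nonneg _
    have hs1 : ∀ i, s i ≤ 1 := by
      intro i
      set G : Matrix (Fin m) (Fin m) ℝ := R * Rᵀ with hG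
      have hGG : G * G = G := by
        rw [hG, Matrix.mul_assoc, ← Matrix.mul_assoc Rᵀ R Rᵀ, hRR, Matrix.one_mul]
      have hGsym : ∀ a b, G a b = G b a := by
        intro a b
        simp only [hG, Matrix.mul_apply, Matrix.transpose_apply]
        exact Finset.sum_congr rfl fun j _ => mul_comm _ _
      have hGii : G i i = s i := by
        simp only [hG, Matrix.mul_apply, Matrix.transpose_apply, hs, sq]
      have h1 : s i = ∑ k, (G i k) ^ 2 := by
        have h := congrArg (fun M => M i i) hGG
        simp only [Matrix.mul_apply] at h
        rw [← hGii]
        conv_lhs => rw [← h]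
        exact Finset.sum_congr rfl fun k _ => by rw [hGsym k i]; ring
      have h2 : (s i) ^ 2 ≤ ∑ k, (G i k) ^ 2 := by
        rw [← hGii]
        exact Finset.single_le_sum (f := fun k => (G i k) ^ 2)
          (fun k _ => sq_nonneg _) (Finset.mem_univ i)
      nlinarith [hs0 i]
    have htr : Matrix.trace (Rᵀ * diagonal lam * R) = ∑ i, lam i * s i := by
      rw [Matrix.mul_assoc, Matrix.trace]
      simp only [Matrix.diag_apply, Matrix.mul_apply, Matrix.transpose_apply,
        Matrix.diagonal_apply, ite_mul, zero_mul, Finset.sum_ite_eq, Finset.mem_univ, if_true]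
      rw [Finset.sum_comm]
      refine Finset.sum_congr rfl fun i _ => ?_
      simp only [hs, Finset.mul_sum]
      exact Finset.sum_congr rfl fun j _ => by ring
    have hkey := key_ineq m d hd (lam ∘ σ) (s ∘ σ) hmono
      (fun i => hs0 (σ i)) (fun i => hs1 (σ i))
      (by simp only [Function.comp_apply]; rw [Equiv.sum_comp σ s]; exact hsum)
    have hperm : ∑ i, (lam ∘ σ) i * (s ∘ σ) i = ∑ i, lam i * s i := by
      simp only [Function.comp_apply]
      exact Equiv.sum_comp σ (fun i => lam i * s i)
    rw [hPAP, htr]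
    calc ∑ i : Fin d, lam (σ (Fin.castLE hd i)) ≤ ∑ i, (lam ∘ σ) i * (s ∘ σ) i := hkey
      _ = ∑ i, lam i * s i := hperm
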